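/- Let G be a finite p-group and d ≥ 1 such that G^(d) γ_{2^d+1}(G) / γ_{2^d+1}(G) is cyclic. Then for every e ≥ 1, G^(d+e) is contained in γ_{2^{d+e} + 2^{e-1}}(G). -/

import Mathlib

open Subgroup

/-- Three subgroups lemma, relative version: if two of the rotated double commutators
lie in a normal subgroup `L`, so does the third. -/
lemma three_subgroups_le {G : Type*} [Group G] {A B C L : Subgroup G} [L.Normal]
    (h1 : ⁅⁅B, C⁆, A⁆ ≤ L) (h2 : ⁅⁅C, A⁆, B⁆ ≤ L) : ⁅⁅A, B⁆, C⁆ ≤ L := by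
  let f := QuotientGroup.mk' L
  have key : ∀ X Y Z : Subgroup G, ⁅⁅X, Y⁆, Z⁆ ≤ L ↔ ⁅⁅map f X, map f Y⁆, map f Z⁆ = ⊥ := by
    intro X Y Z
    rw [← map_commutator, ← map_commutator, Subgroup.map_eq_bot_iff,
      QuotientGroup.ker_mk']
  rw [key] at h1 h2 ⊢
  exact Subgroup.commutator_commutator_eq_bot_of_rotate h1 h2

lemma lcs_succ' {G : Type*} [Group G] (n : ℕ) :
    (⊤ : Subgroup G).lowerCentralSeries (n + 1) = ⁅(⊤ : Subgroup G).lowerCentralSeries n, ⊤⁆ := rfl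

/-- `⁅γ_{m+1}, γ_{n+1}⁆ ≤ γ_{m+n+2}` (mathlib indexing of the lower central series). -/
lemma lcs_commutator_le {G : Type*} [Group G] (n : ℕ) :
    ∀ m : ℕ, ⁅(⊤ : Subgroup G).lowerCentralSeries m, (⊤ : Subgroup G).lowerCentralSeries n⁆
      ≤ (⊤ : Subgroup G).lowerCentralSeries (m + n + 1) := by
  induction n with
  | zero =>
    intro m
    simp only [Nat.add_zero, Subgroup.lowerCentralSeries_zero]
    exact le_of_eq (lcs_succ' m).symm
  | succ n ih =>
    intro m
    rw [lcs_succ']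
    refine le_trans (commutator_comm_le _ _) (three_subgroups_le ?_ ?_)
    · rw [commutator_comm (⊤ : Subgroup G), ← lcs_succ']
      have := ih (m + 1)
      refine this.trans (Subgroup.lowerCentralSeries_antitone _ ?_)
      omega
    · refine le_trans (commutator_mono (ih m) le_top) ?_
      rw [← lcs_succ']
      refine Subgroup.lowerCentralSeries_antitone _ ?_
      omega

lemma derivedSeries_le_lcs {G : Type*} [Group G] (n : ℕ) :
    derivedSeries G n ≤ (⊤ : Subgroup G).lowerCentralSeries (2 ^ n - 1) := by
  induction n with
  | zero => simp
  | succ n ih =>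
    rw [derivedSeries_succ]
    refine le_trans (commutator_mono ih ih) ((lcs_commutator_le _ _).trans
      (Subgroup.lowerCentralSeries_antitone _ ?_))
    have : 1 ≤ 2 ^ n := Nat.one_le_two_pow
    have h2 : 2 ^ (n + 1) = 2 ^ n + 2 ^ n := by ring
    omega

/-- If the image of `H` in `G/N` is cyclic, commutators constraints on `N` give
`⁅H, H⁆ ≤ L`. -/
lemma commutator_le_of_cyclic {G : Type*} [Group G] {H N L : Subgroup G}
    [N.Normal] [L.Normal]
    (hcyc : IsCyclic (Subgroup.map (QuotientGroup.mk' N) H))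
    (hHN : ⁅H, N⁆ ≤ L) (hNN : ⁅N, N⁆ ≤ L) : ⁅H, H⁆ ≤ L := by
  obtain ⟨⟨y, hy⟩, hgen⟩ := hcyc
  obtain ⟨x, hxH, rfl⟩ := hy
  -- H is contained in ⟨x⟩ ⊔ N
  have hHle : H ≤ Subgroup.zpowers x ⊔ N := by
    intro h hh
    obtain ⟨k, hk⟩ := hgen ⟨QuotientGroup.mk' N h, Subgroup.mem_map_of_mem _ hh⟩
    have hk' : (QuotientGroup.mk' N x) ^ k = QuotientGroup.mk' N h := by
      simpa using congrArg Subtype.val hk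
    have hker : (x ^ k)⁻¹ * h ∈ N := by
      apply QuotientGroup.eq.mp
      simpa [QuotientGroup.mk'_apply, QuotientGroup.mk_zpow] using hk'
    have hdec : h = x ^ k * ((x ^ k)⁻¹ * h) := by group
    rw [hdec]
    exact mul_mem (Subgroup.mem_sup_left (Subgroup.zpow_mem _ (Subgroup.mem_zpowers x) k))
      (Subgroup.mem_sup_right hker)
  -- pass to G / L
  let f := QuotientGroup.mk' L
  have key : ∀ X Y : Subgroup G, ⁅X, Y⁆ ≤ L ↔ ⁅map f X, map f Y⁆ = ⊥ := by
    intro X Y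
    rw [← map_commutator, Subgroup.map_eq_bot_iff, QuotientGroup.ker_mk']
  rw [key]
  have hA : map f H ≤ Subgroup.zpowers (f x) ⊔ map f N := by
    refine le_trans (Subgroup.map_mono hHle) (le_of_eq ?_)
    rw [Subgroup.map_sup, MonoidHom.map_zpowers]
  set A := Subgroup.zpowers (f x) with hAdef
  set B := map f N with hBdef
  have hAleH : A ≤ map f H := Subgroup.zpowers_le.mpr (Subgroup.mem_map_of_mem _ hxH)
  have hHNbot : ⁅map f H, B⁆ = ⊥ := (key H N).mp hHN
  have hAB : ⁅A, B⁆ = ⊥ :=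
    le_bot_iff.mp ((commutator_mono hAleH le_rfl).trans hHNbot.le)
  have hBB : ⁅B, B⁆ = ⊥ := (key N N).mp hNN
  have hAA : ⁅A, A⁆ = ⊥ :=
    commutator_eq_bot_iff_le_centralizer.mpr
      (Subgroup.le_centralizer_iff_isMulCommutative.mpr inferInstance)
  have sAA : A ≤ centralizer A := commutator_eq_bot_iff_le_centralizer.mp hAA
  have sAB : A ≤ centralizer B := commutator_eq_bot_iff_le_centralizer.mp hAB
  have sBB : B ≤ centralizer B := commutator_eq_bot_iff_le_centralizer.mp hBB
  have sBA : B ≤ centralizer A :=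
    commutator_eq_bot_iff_le_centralizer.mp (by rwa [commutator_comm] at hAB)
  have hc : A ⊔ B ≤ centralizer ↑(A ⊔ B) :=
    sup_le (Subgroup.le_centralizer_iff.mpr (sup_le sAA sBA))
      (Subgroup.le_centralizer_iff.mpr (sup_le sAB sBB))
  have hsup : ⁅A ⊔ B, A ⊔ B⁆ = ⊥ := commutator_eq_bot_iff_le_centralizer.mpr hc
  exact le_bot_iff.mp ((commutator_mono hA hA).trans hsup.le)

theorem derivedSeries_le_of_cyclic_image
    {p : ℕ} [Fact p.Prime] {G : Type*} [Group G] [Finite G]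
    (hG : IsPGroup p G) (d : ℕ) (hd : 1 ≤ d)
    (hcyc : IsCyclic
      (Subgroup.map (QuotientGroup.mk' ((⊤ : Subgroup G).lowerCentralSeries (2 ^ d)))
        (derivedSeries G d))) :
    ∀ e, 1 ≤ e →
      derivedSeries G (d + e) ≤ (⊤ : Subgroup G).lowerCentralSeries (2 ^ (d + e) + 2 ^ (e - 1) - 1) := by
  intro e he
  induction e, he using Nat.le_induction with
  | base =>
    have hidx : 2 ^ (d + 1) + 2 ^ (1 - 1) - 1 = 2 ^ (d + 1) := by norm_num
    rw [hidx, derivedSeries_succ]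
    have h1 : 1 ≤ 2 ^ d := Nat.one_le_two_pow
    have h2 : 2 ^ (d + 1) = 2 ^ d + 2 ^ d := by ring
    refine commutator_le_of_cyclic hcyc ?_ ?_
    · refine le_trans (commutator_mono (derivedSeries_le_lcs d) le_rfl) ?_
      refine (lcs_commutator_le _ _).trans (Subgroup.lowerCentralSeries_antitone _ ?_)
      omega
    · refine (lcs_commutator_le _ _).trans (Subgroup.lowerCentralSeries_antitone _ ?_)
      omega
  | succ n hn ih =>
    have h1 : 1 ≤ 2 ^ (d + n) := Nat.one_le_two_pow
    have h2 : 1 ≤ 2 ^ (n - 1) := Nat.one_le_two_pow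
    have h3 : 2 ^ n = 2 * 2 ^ (n - 1) := by
      rw [← pow_succ']
      congr 1
      omega
    have h4 : 2 ^ (d + n + 1) = 2 * 2 ^ (d + n) := by rw [← pow_succ']
    rw [show d + (n + 1) = (d + n) + 1 from rfl, derivedSeries_succ]
    refine le_trans (commutator_mono ih ih) ?_
    refine (lcs_commutator_le _ _).trans (Subgroup.lowerCentralSeries_antitone _ ?_)
    simp only [Nat.add_sub_cancel]
    omega
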